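/- Let α > 0 and m > 0 and let y be distributed according to the negative binomial pmf f(·; m, α). Then ∑_{y=0}^∞ f(y; m, α) · ψ(α+y) = ψ(α) + log( (α+m)/α ), where ψ is the digamma function. Equivalently, the score with respect to α has zero expectation. -/

import Mathlib

/-- The negative binomial pmf with mean parameter `m > 0` and shape parameter `α > 0`. -/
noncomputable def negBinom (α m : ℝ) (y : ℕ) : ℝ :=
  Real.Gamma (α + y) * α ^ α * m ^ y /
    (Real.Gamma α * y.factorial * (α + m) ^ (α + (y : ℝ)))

/-- The digamma function `ψ = (log Γ)'`. -/
noncomputable def digamma (x : ℝ) : ℝ :=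
  deriv (fun t : ℝ => Real.log (Real.Gamma t)) x

open Real Filter Set Metric

namespace NBaux

noncomputable def c (α : ℝ) (n : ℕ) : ℝ := Real.Gamma (α + n) / (Real.Gamma α * n.factorial)

noncomputable def h (α : ℝ) (n : ℕ) : ℝ := ∑ i ∈ Finset.range n, 1 / (α + i)

noncomputable def d (α : ℝ) (n : ℕ) : ℝ := c α n * h α n

variable {α : ℝ}

lemma c_zero (hα : 0 < α) : c α 0 = 1 := by
  have : Real.Gamma α ≠ 0 := (Real.Gamma_pos_of_pos hα).ne'
  simp [c, this]

lemma c_pos (hα : 0 < α) (n : ℕ) : 0 < c α n := by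
  apply div_pos (Real.Gamma_pos_of_pos (by have := (n.cast_nonneg : (0:ℝ) ≤ n); linarith))
  have := Real.Gamma_pos_of_pos hα
  positivity

lemma c_succ (hα : 0 < α) (n : ℕ) : ((n : ℝ) + 1) * c α (n + 1) = (α + n) * c α n := by
  have hne : α + (n : ℝ) ≠ 0 := ne_of_gt (by have := (n.cast_nonneg : (0:ℝ) ≤ n); linarith)
  have hG : Real.Gamma (α + (n + 1 : ℕ)) = (α + n) * Real.Gamma (α + n) := by
    rw [show α + ((n : ℕ) + 1 : ℕ) = (α + n) + 1 by push_cast; ring, Real.Gamma_add_one hne]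
  have hΓ : Real.Gamma α ≠ 0 := (Real.Gamma_pos_of_pos hα).ne'
  have hfac : (n.factorial : ℝ) ≠ 0 := by positivity
  rw [c, c, hG, Nat.factorial_succ]
  push_cast
  field_simp

lemma hasDerivAt_logGamma {x : ℝ} (hx : 0 < x) :
    HasDerivAt (fun t : ℝ => Real.log (Real.Gamma t)) (digamma x) x := by
  have hd : DifferentiableAt ℝ (fun t : ℝ => Real.log (Real.Gamma t)) x := by
    have hg : DifferentiableAt ℝ Real.Gamma x :=
      Real.differentiableAt_Gamma (fun m => by
        have : -(m:ℝ) ≤ 0 := neg_nonpos.mpr m.cast_nonneg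
        intro hc; rw [hc] at hx; linarith)
    exact (Real.differentiableAt_log (Real.Gamma_pos_of_pos hx).ne').comp x hg
  exact hd.hasDerivAt

lemma digamma_add_one {x : ℝ} (hx : 0 < x) : digamma (x + 1) = digamma x + 1 / x := by
  have h1 : HasDerivAt (fun t : ℝ => Real.log (Real.Gamma (t + 1))) (digamma (x + 1)) x := by
    have := (hasDerivAt_logGamma (by linarith : (0:ℝ) < x + 1)).comp x
      ((hasDerivAt_id x).add_const 1)
    rw [mul_one] at this; exact this
  have h2 : HasDerivAt (fun t : ℝ => Real.log t + Real.log (Real.Gamma t))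
      (1 / x + digamma x) x := by
    have := (Real.hasDerivAt_log hx.ne').add (hasDerivAt_logGamma hx)
    rw [one_div]; exact this
  have heq : (fun t : ℝ => Real.log (Real.Gamma (t + 1)))
      =ᶠ[nhds x] (fun t : ℝ => Real.log t + Real.log (Real.Gamma t)) := by
    filter_upwards [Ioi_mem_nhds hx] with t ht
    rw [Real.Gamma_add_one (ne_of_gt ht), Real.log_mul (ne_of_gt ht)
      (Real.Gamma_pos_of_pos ht).ne']
  exact ((h2.congr_of_eventuallyEq heq).unique h1).symm.trans (by ring)

lemma digamma_add_nat (hα : 0 < α) (n : ℕ) : digamma (α + n) = digamma α + h α n := by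
  induction n with
  | zero => simp [h]
  | succ k ih =>
    have hk : (0:ℝ) < α + k := by have := (k.cast_nonneg : (0:ℝ) ≤ k); linarith
    have h1 : α + ((k + 1 : ℕ) : ℝ) = (α + k) + 1 := by push_cast; ring
    rw [h1, digamma_add_one hk, ih, h, h, Finset.sum_range_succ]
    ring



lemma pow_succ_le (a L : ℕ) : a^(L+1) + (L+1)*a^L ≤ (a+1)^(L+1) := by
  induction L with
  | zero => simp
  | succ K ih =>
    have key : (a+1)*(a^(K+1)+(K+1)*a^K) = a^(K+2) + (K+2)*a^(K+1) + (K+1)*a^K := by ring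
    calc a^(K+1+1) + (K+1+1)*a^(K+1)
        ≤ a^(K+2) + (K+2)*a^(K+1) + (K+1)*a^K := Nat.le_add_right _ _
      _ = (a+1)*(a^(K+1)+(K+1)*a^K) := key.symm
      _ ≤ (a+1)*(a+1)^(K+1) := Nat.mul_le_mul_left _ ih
      _ = (a+1)^(K+1+1) := by ring

lemma summable_geom_poly (k : ℕ) {r : ℝ} (hr : |r| < 1) :
    Summable (fun n : ℕ => ((n:ℝ)+1)^k * r^n) := by
  have hexp : ∀ n : ℕ, ((n:ℝ)+1)^k * r^n
      = ∑ j ∈ Finset.range (k+1), ((n:ℝ)^j * r^n * (k.choose j : ℝ)) := by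
    intro n
    rw [add_pow, Finset.sum_mul]
    refine Finset.sum_congr rfl fun j hj => by ring
  rw [funext hexp]
  refine summable_sum fun j hj => ?_
  have : Summable (fun n : ℕ => (n:ℝ)^j * r^n) :=
    summable_pow_mul_geometric_of_norm_lt_one j (by rwa [Real.norm_eq_abs])
  exact this.mul_right _

lemma summable_of_poly_bound {a : ℕ → ℝ} {C : ℝ} {K : ℕ}
    (hb : ∀ n, |a n| ≤ C * ((n:ℝ)+1)^K) {x : ℝ} (hx : |x| < 1) :
    Summable (fun n => a n * x^n) := by
  refine Summable.of_norm_bounded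
    ((summable_geom_poly K (r := |x|) (by rwa [abs_abs])).mul_left C) fun n => ?_
  rw [Real.norm_eq_abs, abs_mul, abs_pow]
  calc |a n| * |x|^n ≤ (C * ((n:ℝ)+1)^K) * |x|^n := by
        apply mul_le_mul_of_nonneg_right (hb n) (by positivity)
    _ = C * (((n:ℝ)+1)^K * |x|^n) := by ring


lemma c_le (hα : 0 < α) (n : ℕ) : c α n ≤ ((n:ℝ)+1)^(⌈α⌉₊) := by
  set K := ⌈α⌉₊ with hK
  obtain ⟨L, hL⟩ : ∃ L, K = L + 1 :=
    ⟨K - 1, (Nat.succ_pred_eq_of_pos (Nat.ceil_pos.mpr hα)).symm⟩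
  have hαK : α ≤ K := Nat.le_ceil α
  induction n with
  | zero => simpa using (c_zero hα).le
  | succ n ih =>
    have hn1 : (0:ℝ) < (n:ℝ) + 1 := by positivity
    have hcs := c_succ hα n
    have hcpos := (c_pos hα n).le
    have step1 : (α + n) * c α n ≤ ((K:ℝ) + n) * ((n:ℝ)+1)^K := by
      apply mul_le_mul (by linarith) ih hcpos (by positivity)
    have step2 : ((K:ℝ) + n) * ((n:ℝ)+1)^K ≤ ((n:ℝ)+1) * ((n:ℝ)+2)^K := by
      have hnat : (K + n) * (n+1)^K ≤ (n+1) * (n+2)^K := by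
        rw [hL]
        have hp := pow_succ_le (n+1) L
        calc (L + 1 + n) * (n+1)^(L+1)
            = (n+1) * (n+1)^(L+1) + L * ((n+1) * (n+1)^L) := by ring
          _ ≤ (n+1) * (n+1)^(L+1) + (n+1) * ((L+1) * (n+1)^L) := by
              have : L * ((n+1) * (n+1)^L) ≤ (n+1) * ((L+1) * (n+1)^L) := by
                calc L * ((n+1) * (n+1)^L) = (n+1) * (L * (n+1)^L) := by ring
                  _ ≤ (n+1) * ((L+1) * (n+1)^L) :=
                      Nat.mul_le_mul_left _ (Nat.mul_le_mul_right _ (Nat.le_succ L))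
              exact Nat.add_le_add_left this _
          _ = (n+1) * ((n+1)^(L+1) + (L+1) * (n+1)^L) := by ring
          _ ≤ (n+1) * (n+2)^(L+1) := Nat.mul_le_mul_left _ hp
      have := (Nat.cast_le (α := ℝ)).mpr hnat
      push_cast at this
      convert this using 2 <;> push_cast <;> ring
    have : ((n:ℝ)+1) * c α (n+1) ≤ ((n:ℝ)+1) * ((n:ℝ)+2)^K := by
      rw [hcs]; exact step1.trans step2
    have := le_of_mul_le_mul_left (by linarith [this] : ((n:ℝ)+1) * c α (n+1) ≤ ((n:ℝ)+1) * ((n:ℝ)+2)^K) hn1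
    calc c α (n+1) ≤ ((n:ℝ)+2)^K := this
      _ = (((n+1:ℕ):ℝ)+1)^K := by push_cast; ring_nf

lemma hasDerivAt_tsum_pow {a : ℕ → ℝ} {C : ℝ} {K : ℕ}
    (hb : ∀ n, |a n| ≤ C * ((n:ℝ)+1)^K) {x : ℝ} (hx : |x| < 1) :
    HasDerivAt (fun y : ℝ => ∑' n : ℕ, a n * y^n)
      (∑' n : ℕ, ((n:ℝ)+1) * a (n+1) * x^n) x := by
  set r := (1 + |x|) / 2 with hrdef
  have hr0 : 0 < r := by positivity
  have hxr : |x| < r := by rw [hrdef]; linarith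
  have hr1 : r < 1 := by rw [hrdef]; linarith
  have hC : 0 ≤ C := le_trans (abs_nonneg (a 0)) (by simpa using hb 0)
  set u : ℕ → ℝ := fun n => (C / r) * (((n:ℝ)+1)^(K+1) * r^n) with hu
  have husumm : Summable u := by
    apply Summable.mul_left
    exact summable_geom_poly (K+1) (by rwa [abs_of_pos hr0])
  have hderiv : ∀ (n : ℕ) (y : ℝ), y ∈ ball (0:ℝ) r →
      HasDerivAt (fun z : ℝ => a n * z^n) (a n * ((n:ℝ) * y^(n-1))) y :=
    fun n y _ => (hasDerivAt_pow n y).const_mul (a n)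
  have hbound : ∀ (n : ℕ) (y : ℝ), y ∈ ball (0:ℝ) r →
      ‖a n * ((n:ℝ) * y^(n-1))‖ ≤ u n := by
    intro n y hy
    have hyr : |y| ≤ r := by
      rw [mem_ball, dist_zero_right, Real.norm_eq_abs] at hy; linarith
    rw [Real.norm_eq_abs, abs_mul, abs_mul, abs_pow, Nat.abs_cast]
    match n with
    | 0 => simp [hu]; positivity
    | (m+1) =>
      have h1 : |a (m+1)| ≤ C * ((m:ℝ)+2)^K := by
        have h := hb (m+1); push_cast at h
        rw [show ((m:ℝ)+2) = (m:ℝ)+1+1 by ring]; exact h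
      have h2 : |y| ^ (m+1-1) ≤ r ^ m := by
        simpa using pow_le_pow_left₀ (abs_nonneg y) hyr m
      calc |a (m+1)| * (((m+1:ℕ):ℝ) * |y|^(m+1-1))
          ≤ (C * ((m:ℝ)+2)^K) * (((m:ℝ)+2) * r^m) := by
            push_cast
            apply mul_le_mul h1 ?_ (by positivity) (by positivity)
            apply mul_le_mul (by linarith) h2 (by positivity) (by linarith)
        _ = (C / r) * (((m:ℝ)+2)^(K+1) * (r * r^m)) := by
            field_simp; ring
        _ = u (m+1) := by rw [hu]; push_cast; rw [pow_succ']; ring_nf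
  have hsum0 : Summable (fun n : ℕ => a n * (0:ℝ)^n) := by
    apply summable_of_ne_finset_zero (s := {0})
    intro n hn
    have hn' : n ≠ 0 := by simpa using hn
    simp [zero_pow hn']
  have hmem : x ∈ ball (0:ℝ) r := by
    rw [mem_ball, dist_zero_right, Real.norm_eq_abs]; exact hxr
  have h0mem : (0:ℝ) ∈ ball (0:ℝ) r := mem_ball_self hr0
  have HD := hasDerivAt_tsum_of_isPreconnected husumm isOpen_ball
    (convex_ball (0:ℝ) r).isPreconnected hderiv hbound h0mem hsum0 hmem
  have hsummx : Summable (fun n : ℕ => a n * ((n:ℝ) * x^(n-1))) := by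
    apply Summable.of_norm_bounded husumm
    intro n; exact hbound n x hmem
  have : (∑' n : ℕ, a n * ((n:ℝ) * x^(n-1)))
      = ∑' n : ℕ, ((n:ℝ)+1) * a (n+1) * x^n := by
    rw [Summable.tsum_eq_zero_add hsummx]
    simp only [Nat.cast_zero, zero_mul, mul_zero, zero_add]
    apply tsum_congr
    intro n
    push_cast
    ring_nf
  rw [this] at HD
  exact HD



lemma ode_identity {a e : ℕ → ℝ} {β x : ℝ}
    (hrec : ∀ n : ℕ, ((n:ℝ)+1) * a (n+1) = (β + n) * a n + e n)
    (hsa : Summable (fun n : ℕ => a n * x^n))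
    (hse : Summable (fun n : ℕ => e n * x^n))
    (hsd : Summable (fun n : ℕ => ((n:ℝ)+1) * a (n+1) * x^n)) :
    (1 - x) * ∑' n : ℕ, ((n:ℝ)+1) * a (n+1) * x^n
      = β * (∑' n : ℕ, a n * x^n) + ∑' n : ℕ, e n * x^n := by
  set S' := ∑' n : ℕ, ((n:ℝ)+1) * a (n+1) * x^n with hS'
  have hN : Summable (fun n : ℕ => (n:ℝ) * a n * x^n) := by
    rw [← summable_nat_add_iff 1]
    have : (fun n : ℕ => ((n+1:ℕ):ℝ) * a (n+1) * x^(n+1))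
        = fun n : ℕ => x * (((n:ℝ)+1) * a (n+1) * x^n) := by
      funext n; push_cast; ring
    rw [this]
    exact hsd.mul_left x
  have hxS' : x * S' = ∑' n : ℕ, (n:ℝ) * a n * x^n := by
    rw [Summable.tsum_eq_zero_add hN]
    simp only [Nat.cast_zero, zero_mul, zero_add]
    rw [← tsum_mul_left]
    apply tsum_congr; intro n; push_cast; ring
  have hsub : S' - x * S' = ∑' n : ℕ, (β * a n + e n) * x^n := by
    rw [hxS', hS', ← (hsd.hasSum.sub hN.hasSum).tsum_eq]
    apply tsum_congr; intro n
    rw [hrec n]; ring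
  have hsplit : (∑' n : ℕ, (β * a n + e n) * x^n)
      = β * (∑' n : ℕ, a n * x^n) + ∑' n : ℕ, e n * x^n := by
    rw [← tsum_mul_left, ← ((hsa.mul_left β).hasSum.add hse.hasSum).tsum_eq]
    apply tsum_congr; intro n; ring
  calc (1 - x) * S' = S' - x * S' := by ring
    _ = β * (∑' n : ℕ, a n * x^n) + ∑' n : ℕ, e n * x^n := by rw [hsub, hsplit]

lemma const_of_deriv_zero {f : ℝ → ℝ} (hf : ∀ x ∈ Ioo (-1:ℝ) 1, HasDerivAt f 0 x)
    {x : ℝ} (hx : x ∈ Ioo (-1:ℝ) 1) : f x = f 0 := by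
  have h0 : (0:ℝ) ∈ Ioo (-1:ℝ) 1 := by norm_num
  refine (convex_Ioo (-1:ℝ) 1).is_const_of_fderivWithin_eq_zero
    (fun z hz => ((hf z hz).differentiableAt).differentiableWithinAt) ?_ hx h0
  intro z hz
  rw [fderivWithin_of_isOpen isOpen_Ioo hz, (hf z hz).hasFDerivAt.fderiv]
  ext t
  simp


noncomputable def G (α x : ℝ) : ℝ := ∑' n : ℕ, c α n * x^n
noncomputable def D (α x : ℝ) : ℝ := ∑' n : ℕ, d α n * x^n

lemma c_abs (hα : 0 < α) (n : ℕ) : |c α n| ≤ 1 * ((n:ℝ)+1)^(⌈α⌉₊) := by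
  rw [abs_of_pos (c_pos hα n), one_mul]; exact c_le hα n

lemma h_nonneg (hα : 0 < α) (n : ℕ) : 0 ≤ h α n := by
  apply Finset.sum_nonneg
  intro i _
  have : (0:ℝ) ≤ i := i.cast_nonneg
  positivity

lemma h_le (hα : 0 < α) (n : ℕ) : h α n ≤ ((n:ℝ)+1) * (1/α) := by
  have : h α n ≤ ∑ i ∈ Finset.range n, 1/α := by
    apply Finset.sum_le_sum
    intro i _
    apply one_div_le_one_div_of_le hα
    have : (0:ℝ) ≤ i := i.cast_nonneg
    linarith
  rw [Finset.sum_const, Finset.card_range, nsmul_eq_mul] at this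
  have hn : (n:ℝ) * (1/α) ≤ ((n:ℝ)+1) * (1/α) := by
    apply mul_le_mul_of_nonneg_right (by linarith) (by positivity)
  linarith

lemma d_nonneg (hα : 0 < α) (n : ℕ) : 0 ≤ d α n :=
  mul_nonneg (c_pos hα n).le (h_nonneg hα n)

lemma d_abs (hα : 0 < α) (n : ℕ) : |d α n| ≤ (1/α) * ((n:ℝ)+1)^(⌈α⌉₊+1) := by
  rw [abs_of_nonneg (d_nonneg hα n), d]
  calc c α n * h α n ≤ ((n:ℝ)+1)^(⌈α⌉₊) * (((n:ℝ)+1) * (1/α)) := by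
        apply mul_le_mul (c_le hα n) (h_le hα n) (h_nonneg hα n) (by positivity)
    _ = (1/α) * ((n:ℝ)+1)^(⌈α⌉₊+1) := by rw [pow_succ]; ring

lemma two_bound (K : ℕ) (n : ℕ) : ((n:ℝ)+2)^K ≤ 2^K * ((n:ℝ)+1)^K := by
  rw [← mul_pow]
  apply pow_le_pow_left₀ (by positivity)
  have : (0:ℝ) ≤ n := n.cast_nonneg
  linarith

lemma cd_abs (hα : 0 < α) (n : ℕ) :
    |((n:ℝ)+1) * c α (n+1)| ≤ 2^(⌈α⌉₊) * ((n:ℝ)+1)^(⌈α⌉₊+1) := by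
  have hn1 : (0:ℝ) ≤ (n:ℝ)+1 := by positivity
  rw [abs_mul, abs_of_nonneg hn1, abs_of_pos (c_pos hα (n+1))]
  have h1 : c α (n+1) ≤ ((n:ℝ)+2)^(⌈α⌉₊) := by
    have := c_le hα (n+1); push_cast at this
    calc c α (n+1) ≤ ((n:ℝ)+1+1)^(⌈α⌉₊) := this
      _ = ((n:ℝ)+2)^(⌈α⌉₊) := by rw [show (n:ℝ)+1+1 = (n:ℝ)+2 by ring]
  calc ((n:ℝ)+1) * c α (n+1) ≤ ((n:ℝ)+1) * (2^(⌈α⌉₊) * ((n:ℝ)+1)^(⌈α⌉₊)) :=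
        mul_le_mul_of_nonneg_left (h1.trans (two_bound _ n)) hn1
    _ = 2^(⌈α⌉₊) * ((n:ℝ)+1)^(⌈α⌉₊+1) := by rw [pow_succ]; ring

lemma dd_abs (hα : 0 < α) (n : ℕ) :
    |((n:ℝ)+1) * d α (n+1)| ≤ (2^(⌈α⌉₊+1)/α) * ((n:ℝ)+1)^(⌈α⌉₊+2) := by
  have hn1 : (0:ℝ) ≤ (n:ℝ)+1 := by positivity
  rw [abs_mul, abs_of_nonneg hn1]
  have h1 : |d α (n+1)| ≤ (1/α) * ((n:ℝ)+2)^(⌈α⌉₊+1) := by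
    have := d_abs hα (n+1); push_cast at this
    calc |d α (n+1)| ≤ (1/α) * ((n:ℝ)+1+1)^(⌈α⌉₊+1) := this
      _ = (1/α) * ((n:ℝ)+2)^(⌈α⌉₊+1) := by rw [show (n:ℝ)+1+1 = (n:ℝ)+2 by ring]
  calc ((n:ℝ)+1) * |d α (n+1)|
      ≤ ((n:ℝ)+1) * ((1/α) * (2^(⌈α⌉₊+1) * ((n:ℝ)+1)^(⌈α⌉₊+1))) := by
        apply mul_le_mul_of_nonneg_left _ hn1
        exact h1.trans (by
          apply mul_le_mul_of_nonneg_left (two_bound _ n) (by positivity))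
    _ = (2^(⌈α⌉₊+1)/α) * ((n:ℝ)+1)^(⌈α⌉₊+2) := by rw [pow_succ _ (⌈α⌉₊+1)]; field_simp

lemma d_succ (hα : 0 < α) (n : ℕ) :
    ((n:ℝ)+1) * d α (n+1) = (α + n) * d α n + c α n := by
  have hne : α + (n : ℝ) ≠ 0 := ne_of_gt (by have := (n.cast_nonneg : (0:ℝ) ≤ n); linarith)
  have hh : h α (n+1) = h α n + 1/(α+n) := by
    rw [h, h, Finset.sum_range_succ]
  calc ((n:ℝ)+1) * d α (n+1) = (((n:ℝ)+1) * c α (n+1)) * h α (n+1) := by rw [d]; ring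
    _ = ((α + n) * c α n) * (h α n + 1/(α+n)) := by rw [c_succ hα n, hh]
    _ = (α + n) * d α n + c α n * ((α+n) * (1/(α+n))) := by rw [d]; ring
    _ = (α + n) * d α n + c α n := by rw [mul_one_div, div_self hne, mul_one]

lemma summable_G (hα : 0 < α) {x : ℝ} (hx : |x| < 1) :
    Summable (fun n : ℕ => c α n * x^n) := summable_of_poly_bound (c_abs hα) hx

lemma summable_D (hα : 0 < α) {x : ℝ} (hx : |x| < 1) :
    Summable (fun n : ℕ => d α n * x^n) := summable_of_poly_bound (d_abs hα) hx

lemma hasDerivAt_G (hα : 0 < α) {x : ℝ} (hx : |x| < 1) :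
    HasDerivAt (G α) (∑' n : ℕ, ((n:ℝ)+1) * c α (n+1) * x^n) x :=
  hasDerivAt_tsum_pow (c_abs hα) hx

lemma hasDerivAt_D (hα : 0 < α) {x : ℝ} (hx : |x| < 1) :
    HasDerivAt (D α) (∑' n : ℕ, ((n:ℝ)+1) * d α (n+1) * x^n) x :=
  hasDerivAt_tsum_pow (d_abs hα) hx

lemma G_zero (hα : 0 < α) : G α 0 = 1 := by
  rw [G, tsum_eq_single 0 (fun n hn => by simp [zero_pow hn])]
  simpa using c_zero hα

lemma D_zero (hα : 0 < α) : D α 0 = 0 := by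
  rw [D, tsum_eq_single 0 (fun n hn => by simp [zero_pow hn])]
  simp [d, h]

lemma G_one_sub (hα : 0 < α) {x : ℝ} (hx : x ∈ Ioo (-1:ℝ) 1) :
    (1-x)^α * G α x = 1 := by
  have key : ∀ y ∈ Ioo (-1:ℝ) 1, HasDerivAt (fun z => (1-z)^α * G α z) 0 y := by
    intro y hy
    have h1y : (0:ℝ) < 1 - y := by linarith [hy.2]
    have hyabs : |y| < 1 := abs_lt.mpr ⟨hy.1, hy.2⟩
    have hG := hasDerivAt_G hα hyabs
    set S' := ∑' n : ℕ, ((n:ℝ)+1) * c α (n+1) * y^n with hS'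
    have hsub : HasDerivAt (fun z : ℝ => 1 - z) (-1) y := by
      simpa using (hasDerivAt_id y).const_sub 1
    have hP : HasDerivAt (fun z : ℝ => (1-z)^α) (α * (1-y)^(α-1) * (-1)) y :=
      (Real.hasDerivAt_rpow_const (Or.inl h1y.ne')).comp y hsub
    have hmul := hP.mul hG
    have hrec : ∀ n : ℕ, ((n:ℝ)+1) * c α (n+1) = (α + n) * c α n + (fun _ : ℕ => (0:ℝ)) n :=
      fun n => by rw [c_succ hα n]; simp
    have hode := ode_identity (x := y) hrec (summable_G hα hyabs)
      (by simpa using summable_zero)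
      (summable_of_poly_bound (cd_abs hα) hyabs)
    have hE1 : (1-y)^α = (1-y)^(α-1) * (1-y) := by
      have hh := Real.rpow_add h1y (α-1) 1
      rw [Real.rpow_one] at hh
      rw [show α-1+1 = α by ring] at hh
      exact hh
    refine HasDerivAt.congr_deriv hmul ?_; symm
    simp only [zero_mul, tsum_zero, add_zero] at hode
    rw [show (∑' n : ℕ, c α n * y^n) = G α y from rfl] at hode
    linear_combination (-S') * hE1 + (-((1-y)^(α-1))) * hode
  have := const_of_deriv_zero key hx
  rw [this]
  simp [G_zero hα]

lemma G_closed (hα : 0 < α) {x : ℝ} (hx : x ∈ Ioo (-1:ℝ) 1) :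
    G α x = (1-x)^(-α) := by
  have h1x : (0:ℝ) < 1 - x := by linarith [hx.2]
  have hpow : (0:ℝ) < (1-x)^α := Real.rpow_pos_of_pos h1x α
  have := G_one_sub hα hx
  rw [Real.rpow_neg h1x.le]
  field_simp
  linarith [this]

lemma D_one_sub (hα : 0 < α) {x : ℝ} (hx : x ∈ Ioo (-1:ℝ) 1) :
    (1-x)^α * D α x = -Real.log (1-x) := by
  have key : ∀ y ∈ Ioo (-1:ℝ) 1, HasDerivAt (fun z => (1-z)^α * D α z + Real.log (1-z)) 0 y := by
    intro y hy
    have h1y : (0:ℝ) < 1 - y := by linarith [hy.2]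
    have hyabs : |y| < 1 := abs_lt.mpr ⟨hy.1, hy.2⟩
    have hD := hasDerivAt_D hα hyabs
    set S' := ∑' n : ℕ, ((n:ℝ)+1) * d α (n+1) * y^n with hS'
    have hsub : HasDerivAt (fun z : ℝ => 1 - z) (-1) y := by
      simpa using (hasDerivAt_id y).const_sub 1
    have hP : HasDerivAt (fun z : ℝ => (1-z)^α) (α * (1-y)^(α-1) * (-1)) y :=
      (Real.hasDerivAt_rpow_const (Or.inl h1y.ne')).comp y hsub
    have hL : HasDerivAt (fun z : ℝ => Real.log (1-z)) ((1-y)⁻¹ * (-1)) y :=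
      (Real.hasDerivAt_log h1y.ne').comp y hsub
    have hmul := (hP.mul hD).add hL
    have hrec : ∀ n : ℕ, ((n:ℝ)+1) * d α (n+1) = (α + n) * d α n + c α n :=
      d_succ hα
    have hode := ode_identity (x := y) hrec (summable_D hα hyabs)
      (summable_G hα hyabs)
      (summable_of_poly_bound (dd_abs hα) hyabs)
    rw [show (∑' n : ℕ, c α n * y^n) = G α y from rfl, G_closed hα hy] at hode
    have hE1 : (1-y)^α = (1-y)^(α-1) * (1-y) := by
      have hh := Real.rpow_add h1y (α-1) 1
      rw [Real.rpow_one] at hh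
      rw [show α-1+1 = α by ring] at hh
      exact hh
    have hE3 : (1-y)^(α-1) * (1-y)^(-α) = (1-y)⁻¹ := by
      rw [← Real.rpow_add h1y, show α - 1 + -α = -1 by ring, Real.rpow_neg_one]
    refine HasDerivAt.congr_deriv hmul ?_; symm
    rw [show (∑' n : ℕ, d α n * y^n) = D α y from rfl] at hode
    linear_combination (-S') * hE1 + (-((1-y)^(α-1))) * hode + (-1) * hE3
  have h2 := const_of_deriv_zero key hx
  simp [D_zero hα] at h2
  linarith [h2]

end NBaux

open NBaux in
/-- For `y` negative binomial, `E ψ(α + y) = ψ(α) + log((α+m)/α)`; equivalently, the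
score with respect to `α` has zero expectation. -/
theorem negBinom_expectation_digamma (α m : ℝ) (hα : 0 < α) (hm : 0 < m) :
    ∑' y : ℕ, negBinom α m y * digamma (α + y) =
      digamma α + Real.log ((α + m) / α) := by
  have hαm : (0:ℝ) < α + m := by linarith
  set p := m / (α + m) with hp
  set q := α / (α + m) with hq
  have hp0 : 0 < p := by positivity
  have hp1 : p < 1 := by rw [hp, div_lt_one hαm]; linarith
  have hpabs : |p| < 1 := by rw [abs_of_pos hp0]; exact hp1
  have hq0 : 0 < q := by positivity
  have h1p : 1 - p = q := by rw [hp, hq]; field_simp; ring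
  have hpmem : p ∈ Ioo (-1:ℝ) 1 := ⟨by linarith, hp1⟩
  have hNB : ∀ y : ℕ, negBinom α m y = q ^ α * (c α y * p ^ y) := by
    intro y
    rw [negBinom, c, hq, hp]
    rw [Real.rpow_add hαm, Real.rpow_natCast, Real.div_rpow hα.le hαm.le, div_pow]
    have h1 : Real.Gamma α ≠ 0 := (Real.Gamma_pos_of_pos hα).ne'
    have h2 : (y.factorial : ℝ) ≠ 0 := by positivity
    have h3 : (α+m) ^ α ≠ 0 := (Real.rpow_pos_of_pos hαm α).ne'
    have h4 : ((α+m):ℝ) ^ y ≠ 0 := by positivity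
    field_simp
  have hsumG := summable_G hα hpabs
  have hsumD := summable_D hα hpabs
  have hterm : ∀ y : ℕ, negBinom α m y * digamma (α + y)
      = (digamma α * q ^ α) * (c α y * p ^ y) + q ^ α * (d α y * p ^ y) := by
    intro y
    rw [hNB y, digamma_add_nat hα y, d]
    ring
  rw [tsum_congr hterm,
    ((hsumG.mul_left (digamma α * q ^ α)).hasSum.add
      ((hsumD.mul_left (q ^ α)).hasSum)).tsum_eq,
    tsum_mul_left, tsum_mul_left]
  have hGp : (∑' n : ℕ, c α n * p ^ n) = G α p := rfl
  have hDp : (∑' n : ℕ, d α n * p ^ n) = D α p := rfl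
  rw [hGp, hDp]
  have hGone := G_one_sub hα hpmem
  have hDone := D_one_sub hα hpmem
  rw [h1p] at hGone hDone
  have hlog : -Real.log q = Real.log ((α+m)/α) := by
    rw [hq, ← Real.log_inv, inv_div]
  calc digamma α * q ^ α * G α p + q ^ α * D α p
      = digamma α * (q ^ α * G α p) + q ^ α * D α p := by ring
    _ = digamma α + Real.log ((α+m)/α) := by rw [hGone, hDone, hlog]; ring
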